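/- Abel's identity special case: for all real x > 0, y ≥ 0 and n ≥ 0, the sum over s from 0 to n of C(n,s) (x+s)^(s-1) (y+n-s)^(n-s) equals x^{-1} (x+y+n)^n. -/

import Mathlib

open Finset
lemma alt_sum_monomial : ∀ n : ℕ, ∀ j : ℕ, j < n →
    ∑ s ∈ Finset.range (n + 1), (-1 : ℝ) ^ s * (n.choose s : ℝ) * (s : ℝ) ^ j = 0 := by
  intro n
  induction n with
  | zero => intro j hj; omega
  | succ n ih =>
    intro j hj
    match j with
    | 0 =>
      have h := Int.alternating_sum_range_choose_of_ne (n := n + 1) (by omega)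
      have h2 : ((∑ m ∈ range (n + 1 + 1), (-1 : ℤ) ^ m * ((n+1).choose m) : ℤ) : ℝ) = 0 := by
        rw [h]; norm_num
      push_cast at h2
      simpa using h2
    | k + 1 =>
      have hkn : k + 1 ≤ n := by omega
      set S : ℝ := ∑ s ∈ range (n+1), (-1:ℝ)^s * (n.choose s : ℝ) * (s:ℝ)^(k+1) with hSdef
      rw [Finset.sum_range_succ']
      have h0 : ((-1:ℝ)^0 * (((n+1).choose 0 : ℕ) : ℝ) * ((0:ℕ):ℝ)^(k+1)) = 0 := by norm_num
      rw [h0, add_zero]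
      have hterm : ∀ i ∈ range (n+1), (-1:ℝ)^(i+1) * (((n+1).choose (i+1) : ℕ) : ℝ) * (((i+1:ℕ)):ℝ)^(k+1)
          = -((-1:ℝ)^i * (n.choose i : ℝ) * ((i:ℝ)+1)^(k+1)) + -((-1:ℝ)^i * (n.choose (i+1) : ℝ) * ((i:ℝ)+1)^(k+1)) := by
        intro i _
        rw [Nat.choose_succ_succ]
        push_cast
        ring
      rw [Finset.sum_congr rfl hterm, Finset.sum_add_distrib, Finset.sum_neg_distrib,
        Finset.sum_neg_distrib]
      have hB : ∑ i ∈ range (n+1), (-1:ℝ)^i * (n.choose (i+1) : ℝ) * ((i:ℝ)+1)^(k+1) = -S := by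
        have e : S = ∑ i ∈ range n, -((-1:ℝ)^i * (n.choose (i+1):ℝ) * ((i:ℝ)+1)^(k+1)) := by
          rw [hSdef, Finset.sum_range_succ']
          have h0' : ((-1:ℝ)^0 * ((n.choose 0 : ℕ) : ℝ) * ((0:ℕ):ℝ)^(k+1)) = 0 := by norm_num
          rw [h0', add_zero]
          refine Finset.sum_congr rfl fun i _ => ?_
          push_cast; ring
        rw [e, Finset.sum_neg_distrib, neg_neg]
        rw [Finset.sum_range_succ]
        simp
      have hA : ∑ i ∈ range (n+1), (-1:ℝ)^i * (n.choose i : ℝ) * ((i:ℝ)+1)^(k+1) = S := by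
        have e : ∀ i ∈ range (n+1), (-1:ℝ)^i * (n.choose i : ℝ) * ((i:ℝ)+1)^(k+1)
            = ∑ m ∈ range (k+2), (((k+1).choose m : ℕ) : ℝ) * ((-1:ℝ)^i * (n.choose i :ℝ) * (i:ℝ)^m) := by
          intro i _
          have hb : ((i:ℝ)+1)^(k+1) = ∑ m ∈ range (k+1+1), (i:ℝ)^m * 1^(k+1-m) * (((k+1).choose m : ℕ) : ℝ) :=
            add_pow _ _ _
          rw [hb, Finset.mul_sum]
          exact Finset.sum_congr rfl fun m _ => by ring
        rw [Finset.sum_congr rfl e, Finset.sum_comm]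
        have e2 : ∀ m ∈ range (k+2), ∑ i ∈ range (n+1), (((k+1).choose m : ℕ) : ℝ) * ((-1:ℝ)^i * (n.choose i :ℝ) * (i:ℝ)^m)
            = (((k+1).choose m : ℕ) : ℝ) * ∑ i ∈ range (n+1), (-1:ℝ)^i * (n.choose i :ℝ) * (i:ℝ)^m := by
          intro m _
          rw [Finset.mul_sum]
        rw [Finset.sum_congr rfl e2, Finset.sum_range_succ]
        have e3 : ∀ m ∈ range (k+1), (((k+1).choose m : ℕ) : ℝ) * ∑ i ∈ range (n+1), (-1:ℝ)^i * (n.choose i :ℝ) * (i:ℝ)^m = 0 := by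
          intro m hm
          rw [ih m (by simp at hm; omega), mul_zero]
        rw [Finset.sum_congr rfl e3]
        simp
        exact hSdef.symm
      rw [hA, hB]
      ring
lemma abel_anchor (n : ℕ) (x : ℝ) (hx : 0 < x) (hn : 0 < n) :
    ∑ s ∈ Finset.range (n + 1), (n.choose s : ℝ) * (x + s) ^ ((s : ℤ) - 1) * (-(x + (s:ℝ))) ^ (n - s) = 0 := by
  have hterm : ∀ s ∈ Finset.range (n+1),
      (n.choose s : ℝ) * (x + s) ^ ((s : ℤ) - 1) * (-(x + (s:ℝ))) ^ (n - s)
        = (-1:ℝ)^n * ((-1:ℝ)^s * (n.choose s : ℝ) * (x + (s:ℝ)) ^ (n-1)) := by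
    intro s hs
    have hsn : s ≤ n := by simp at hs; omega
    have hne : x + (s:ℝ) ≠ 0 := by positivity
    have hsign : (-1:ℝ)^(n-s) = (-1:ℝ)^n * (-1:ℝ)^s := by
      have h1 : (-1:ℝ)^n = (-1:ℝ)^(n-s) * (-1:ℝ)^s := by
        rw [← pow_add, Nat.sub_add_cancel hsn]
      have h2 : (-1:ℝ)^s * (-1:ℝ)^s = 1 := by
        rw [← pow_add, ← two_mul, pow_mul]; norm_num
      calc (-1:ℝ)^(n-s) = (-1:ℝ)^(n-s) * ((-1:ℝ)^s * (-1:ℝ)^s) := by rw [h2, mul_one]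
        _ = ((-1:ℝ)^(n-s) * (-1:ℝ)^s) * (-1:ℝ)^s := by ring
        _ = (-1:ℝ)^n * (-1:ℝ)^s := by rw [← h1]
    have hpow : (x + (s:ℝ)) ^ ((s : ℤ) - 1) * (x + (s:ℝ)) ^ (n - s) = (x + (s:ℝ)) ^ (n - 1) := by
      rw [← zpow_natCast (x + (s:ℝ)) (n - s), ← zpow_natCast (x + (s:ℝ)) (n - 1),
        ← zpow_add₀ hne]
      congr 1
      have : ((n - s : ℕ) : ℤ) = (n:ℤ) - s := by omega
      rw [this]
      omega
    rw [neg_pow]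
    calc (n.choose s : ℝ) * (x + ↑s) ^ ((s:ℤ) - 1) * ((-1:ℝ)^(n-s) * (x + ↑s) ^ (n - s))
        = (-1:ℝ)^(n-s) * ((n.choose s : ℝ) * ((x + ↑s) ^ ((s:ℤ) - 1) * (x + ↑s) ^ (n - s))) := by ring
      _ = (-1:ℝ)^(n-s) * ((n.choose s : ℝ) * (x + ↑s) ^ (n-1)) := by rw [hpow]
      _ = (-1:ℝ)^n * ((-1:ℝ)^s * (n.choose s : ℝ) * (x + (s:ℝ)) ^ (n-1)) := by
          rw [hsign]; ring
  rw [Finset.sum_congr rfl hterm, ← Finset.mul_sum]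
  have hmain : ∑ s ∈ Finset.range (n+1), (-1:ℝ)^s * (n.choose s : ℝ) * (x + (s:ℝ)) ^ (n-1) = 0 := by
    have hexp : ∀ s ∈ Finset.range (n+1), (-1:ℝ)^s * (n.choose s : ℝ) * (x + (s:ℝ)) ^ (n-1)
        = ∑ m ∈ Finset.range (n-1+1), x ^ m * (((n-1).choose m : ℕ) : ℝ) * ((-1:ℝ)^s * (n.choose s : ℝ) * (s:ℝ)^(n-1-m)) := by
      intro s _
      have hb : (x + (s:ℝ)) ^ (n-1) = ∑ m ∈ Finset.range (n-1+1), x ^ m * (s:ℝ)^(n-1-m) * (((n-1).choose m : ℕ) : ℝ) :=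
        add_pow _ _ _
      rw [hb, Finset.mul_sum]
      exact Finset.sum_congr rfl fun m _ => by ring
    rw [Finset.sum_congr rfl hexp, Finset.sum_comm]
    refine Finset.sum_eq_zero fun m hm => ?_
    have : ∑ s ∈ Finset.range (n+1), x ^ m * (((n-1).choose m : ℕ) : ℝ) * ((-1:ℝ)^s * (n.choose s : ℝ) * (s:ℝ)^(n-1-m))
        = x ^ m * (((n-1).choose m : ℕ) : ℝ) * ∑ s ∈ Finset.range (n+1), (-1:ℝ)^s * (n.choose s : ℝ) * (s:ℝ)^(n-1-m) := by
      rw [Finset.mul_sum]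
    rw [this, alt_sum_monomial n (n-1-m) (by omega), mul_zero]
  rw [hmain, mul_zero]
lemma abel_key (x : ℝ) (hx : 0 < x) : ∀ (n : ℕ) (y : ℝ),
    ∑ s ∈ Finset.range (n + 1),
        (n.choose s : ℝ) * (x + s) ^ ((s : ℤ) - 1) * (y + n - s) ^ (n - s)
      = x⁻¹ * (x + y + n) ^ n := by
  intro n
  induction n with
  | zero =>
    intro y
    norm_num [Finset.sum_range_one, zpow_neg_one]
  | succ n ih =>
    set F : ℝ → ℝ := fun y => ∑ s ∈ Finset.range (n + 1 + 1),
        ((n+1).choose s : ℝ) * (x + s) ^ ((s : ℤ) - 1) * (y + (((n+1:ℕ):ℝ) - s)) ^ (n + 1 - s) with hF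
    set G : ℝ → ℝ := fun y => x⁻¹ * (x + y + ((n+1:ℕ):ℝ)) ^ (n+1) with hG
    have hFeq : ∀ y : ℝ, (∑ s ∈ Finset.range (n + 1 + 1),
        ((n+1).choose s : ℝ) * (x + s) ^ ((s : ℤ) - 1) * (y + ((n+1:ℕ):ℝ) - s) ^ (n + 1 - s)) = F y := by
      intro y
      simp only [hF]
      refine Finset.sum_congr rfl fun s _ => ?_
      have h : y + ((n+1:ℕ):ℝ) - s = y + (((n+1:ℕ):ℝ) - s) := by ring
      rw [h]
    -- derivative of F
    have hF' : ∀ y : ℝ, HasDerivAt F (((n+1:ℕ):ℝ) * (x⁻¹ * (x + (y+1) + (n:ℝ))^n)) y := by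
      intro y
      have h1 : HasDerivAt F (∑ s ∈ Finset.range (n + 1 + 1),
          ((n+1).choose s : ℝ) * (x + s) ^ ((s : ℤ) - 1) *
            (((n + 1 - s : ℕ):ℝ) * (y + (((n+1:ℕ):ℝ) - s)) ^ (n + 1 - s - 1))) y := by
        rw [hF]
        apply HasDerivAt.fun_sum
        intro s _
        have hb : HasDerivAt (fun y : ℝ => y + (((n+1:ℕ):ℝ) - s)) 1 y :=
          (hasDerivAt_id y).add_const _
        have h2 := (hb.pow (n + 1 - s)).const_mul (((n+1).choose s : ℝ) * (x + s) ^ ((s : ℤ) - 1))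
        simpa [mul_assoc, mul_comm, mul_left_comm] using h2
      have hval : (∑ s ∈ Finset.range (n + 1 + 1),
          ((n+1).choose s : ℝ) * (x + s) ^ ((s : ℤ) - 1) *
            (((n + 1 - s : ℕ):ℝ) * (y + (((n+1:ℕ):ℝ) - s)) ^ (n + 1 - s - 1)))
          = ((n+1:ℕ):ℝ) * (x⁻¹ * (x + (y+1) + (n:ℝ))^n) := by
        rw [Finset.sum_range_succ]
        have hlast : (((n+1).choose (n+1) : ℕ) : ℝ) * (x + ((n+1:ℕ):ℝ)) ^ (((n+1:ℕ) : ℤ) - 1) *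
            (((n + 1 - (n+1) : ℕ):ℝ) * (y + (((n+1:ℕ):ℝ) - ((n+1:ℕ):ℝ))) ^ (n + 1 - (n+1) - 1)) = 0 := by
          simp
        rw [hlast, add_zero]
        have hstep : ∀ s ∈ Finset.range (n+1),
            ((n+1).choose s : ℝ) * (x + s) ^ ((s : ℤ) - 1) *
              (((n + 1 - s : ℕ):ℝ) * (y + (((n+1:ℕ):ℝ) - s)) ^ (n + 1 - s - 1))
            = ((n+1:ℕ):ℝ) * ((n.choose s : ℝ) * (x + s) ^ ((s : ℤ) - 1) * ((y+1) + (n:ℝ) - s) ^ (n - s)) := by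
          intro s hs
          have hsn : s ≤ n := by simp at hs; omega
          have hc : (((n+1).choose s : ℕ) : ℝ) * ((n + 1 - s : ℕ):ℝ) = ((n+1:ℕ):ℝ) * (n.choose s : ℝ) := by
            have h' : (n+1).choose s * (n + 1 - s) = n.choose s * (n+1) := (Nat.choose_mul_succ_eq n s).symm
            have h2 : (((n+1).choose s * (n + 1 - s) : ℕ) : ℝ) = ((n.choose s * (n+1) : ℕ) : ℝ) := by
              exact_mod_cast congrArg (fun t : ℕ => (t:ℝ)) h'
            push_cast at h2
            push_cast
            linarith
          have he : n + 1 - s - 1 = n - s := by omega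
          have hbase : y + (((n+1:ℕ):ℝ) - s) = (y+1) + (n:ℝ) - s := by push_cast; ring
          rw [he, hbase]
          calc (((n+1).choose s : ℕ) : ℝ) * (x + s) ^ ((s : ℤ) - 1) *
              (((n + 1 - s : ℕ):ℝ) * ((y+1) + (n:ℝ) - s) ^ (n - s))
              = ((((n+1).choose s : ℕ) : ℝ) * ((n + 1 - s : ℕ):ℝ)) * ((x + s) ^ ((s : ℤ) - 1) * ((y+1) + (n:ℝ) - s) ^ (n - s)) := by ring
            _ = (((n+1:ℕ):ℝ) * (n.choose s : ℝ)) * ((x + s) ^ ((s : ℤ) - 1) * ((y+1) + (n:ℝ) - s) ^ (n - s)) := by rw [hc]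
            _ = ((n+1:ℕ):ℝ) * ((n.choose s : ℝ) * (x + s) ^ ((s : ℤ) - 1) * ((y+1) + (n:ℝ) - s) ^ (n - s)) := by ring
        rw [Finset.sum_congr rfl hstep, ← Finset.mul_sum, ih (y+1)]
      rw [hval] at h1
      exact h1
    -- derivative of G
    have hG' : ∀ y : ℝ, HasDerivAt G (((n+1:ℕ):ℝ) * (x⁻¹ * (x + (y+1) + (n:ℝ))^n)) y := by
      intro y
      have hb : HasDerivAt (fun y : ℝ => x + y + ((n+1:ℕ):ℝ)) 1 y := by
        simpa using (((hasDerivAt_id y).const_add x).add_const ((n+1:ℕ):ℝ))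
      have h2 := (hb.pow (n+1)).const_mul (x⁻¹ : ℝ)
      have hbase : x + y + ((n+1:ℕ):ℝ) = x + (y+1) + (n:ℝ) := by push_cast; ring
      have hmm : n + 1 - 1 = n := by omega
      rw [hbase, hmm] at h2
      rw [hG]
      simpa [mul_assoc, mul_comm, mul_left_comm] using h2
    have hH : ∀ y : ℝ, HasDerivAt (fun y => F y - G y) 0 y := by
      intro y
      simpa using (hF' y).fun_sub (hG' y)
    have hconst : ∀ y z : ℝ, F y - G y = F z - G z := by
      intro y z
      exact is_const_of_deriv_eq_zero (fun t => (hH t).differentiableAt)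
        (fun t => (hH t).deriv) y z
    set y₀ : ℝ := -x - ((n+1:ℕ):ℝ) with hy₀
    have hFy₀ : F y₀ = 0 := by
      simp only [hF]
      have h : ∀ s ∈ Finset.range (n + 1 + 1),
          ((n+1).choose s : ℝ) * (x + s) ^ ((s : ℤ) - 1) * (y₀ + (((n+1:ℕ):ℝ) - s)) ^ (n + 1 - s)
          = ((n+1).choose s : ℝ) * (x + s) ^ ((s : ℤ) - 1) * (-(x + (s:ℝ))) ^ (n + 1 - s) := by
        intro s _
        have h2 : y₀ + (((n+1:ℕ):ℝ) - s) = -(x + (s:ℝ)) := by rw [hy₀]; ring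
        rw [h2]
      rw [Finset.sum_congr rfl h]
      exact abel_anchor (n+1) x hx (by omega)
    have hGy₀ : G y₀ = 0 := by
      simp only [hG]
      have h : x + y₀ + ((n+1:ℕ):ℝ) = 0 := by rw [hy₀]; ring
      rw [h, zero_pow (by omega : n + 1 ≠ 0), mul_zero]
    intro y
    have hcy := hconst y y₀
    rw [hFy₀, hGy₀, sub_zero] at hcy
    have hfin : F y = G y := by linarith
    rw [hFeq y, hfin]

/-- **Abel's identity, special case `A_n(x,y;-1,0)`.** For `x > 0`, `y ≥ 0` and `n ≥ 0`,
`Σ_{s=0}^n C(n,s) (x+s)^(s-1) (y+n-s)^(n-s) = x⁻¹ (x+y+n)^n`. -/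
theorem abel_neg_one_zero (n : ℕ) (x y : ℝ) (hx : 0 < x) (hy : 0 ≤ y) :
    ∑ s ∈ Finset.range (n + 1),
        (n.choose s : ℝ) * (x + s) ^ ((s : ℤ) - 1) * (y + n - s) ^ (n - s)
      = x⁻¹ * (x + y + n) ^ n := by
  exact abel_key x hx n y
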